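/- (Deterministic core of the overhead theorem, F-S option.) Let N, M, U, D, V, L, K_V, K_L be positive integers with UD ≤ N, 3VL ≤ M, 3K_V ≤ U, 3K_L ≤ D, let c ∈ ℂ^N have unit-modulus entries, let 𝒩_p ⊆ {0,…,N−1} have cardinality N_p and ℳ_p ⊆ {0,…,M−1} have cardinality M_p, and define Ā_{τ,ext} = (1/√N_p) P_{𝒩_p} diag(c) F_{N,N}, Ā_τ = the first UD columns of Ā_{τ,ext}, and Ā_θ = (1/√M_p) P_{ℳ_p} F_{M,M}. Let δ_τ, δ_θ > 0 satisfy δ_τ + δ_θ + δ_τδ_θ < 1/√3. If δ_{9K_VK_L}(Ā_{τ,ext}) < δ_τ and δ_{3VL}(Ā_θ*) < δ_θ, then the matrix A = Ā_θ* ⊗ Ā_τ, viewed as acting on 3-level block vectors in ℂ^{M·U·D}, has hierarchical restricted isometry constant δ_{(3VL,3K_V,3K_L)}(A) < 1/√3. -/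

import Mathlib

open scoped Classical

noncomputable section

/-- A vector is `s`-sparse if at most `s` of its entries are nonzero. -/
def Sparse {ι : Type*} [Fintype ι] (s : ℕ) (x : ι → ℂ) : Prop :=
  (Finset.univ.filter fun i => x i ≠ 0).card ≤ s

/-- Squared Euclidean norm. -/
def sqNorm {ι : Type*} [Fintype ι] (x : ι → ℂ) : ℝ := ∑ i, ‖x i‖ ^ 2

/-- Euclidean norm. -/
def enorm {ι : Type*} [Fintype ι] (x : ι → ℂ) : ℝ := Real.sqrt (sqNorm x)

/-- The restricted isometry constant `δ_s(A)`: the smallest `δ ≥ 0` such that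
`(1−δ)‖x‖² ≤ ‖Ax‖² ≤ (1+δ)‖x‖²` for every `s`-sparse `x`. -/
def RIPconst {m n : Type*} [Fintype m] [Fintype n] (A : Matrix m n ℂ) (s : ℕ) : ℝ :=
  sInf {δ : ℝ | 0 ≤ δ ∧ ∀ x : n → ℂ, Sparse s x →
    (1 - δ) * sqNorm x ≤ sqNorm (A.mulVec x) ∧ sqNorm (A.mulVec x) ≤ (1 + δ) * sqNorm x}

/-- `(s₁,s₂,s₃)`-hierarchical sparsity of a 3-level block vector: at most `s₁`
of the `N₁` level-1 blocks are nonzero, within each block at most `s₂` of the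
`N₂` level-2 blocks are nonzero, and each of those contains at most `s₃`
nonzero entries. -/
def HiSparse3 {N₁ N₂ N₃ : ℕ} (s₁ s₂ s₃ : ℕ) (x : Fin N₁ × Fin N₂ × Fin N₃ → ℂ) : Prop :=
  (Finset.univ.filter fun i₁ : Fin N₁ => (fun p : Fin N₂ × Fin N₃ => x (i₁, p)) ≠ 0).card ≤ s₁ ∧
  ∀ i₁ : Fin N₁,
    (Finset.univ.filter fun i₂ : Fin N₂ => (fun i₃ : Fin N₃ => x (i₁, i₂, i₃)) ≠ 0).card ≤ s₂ ∧
    ∀ i₂ : Fin N₂, Sparse s₃ (fun i₃ : Fin N₃ => x (i₁, i₂, i₃))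

/-- The hierarchical restricted isometry constant `δ_{(s₁,s₂,s₃)}(A)` of a
matrix acting on 3-level block vectors. -/
def HiRIPconst3 {m : Type*} [Fintype m] {N₁ N₂ N₃ : ℕ}
    (A : Matrix m (Fin N₁ × Fin N₂ × Fin N₃) ℂ) (s₁ s₂ s₃ : ℕ) : ℝ :=
  sInf {δ : ℝ | 0 ≤ δ ∧ ∀ x : Fin N₁ × Fin N₂ × Fin N₃ → ℂ, HiSparse3 s₁ s₂ s₃ x →
    (1 - δ) * sqNorm x ≤ sqNorm (A.mulVec x) ∧ sqNorm (A.mulVec x) ≤ (1 + δ) * sqNorm x}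

/-- `F_{N,M}`: the first `M` columns of the `N×N` DFT matrix,
`[F_{N,M}]_{nm} = e^{−2πi m n / N}`. -/
def Fmat (N M : ℕ) : Matrix (Fin N) (Fin M) ℂ := fun n m =>
  Complex.exp (-(2 * (Real.pi : ℂ) * Complex.I * (m.1 : ℂ) * (n.1 : ℂ)) / (N : ℂ))

/-- The identification of the pair `(u,d)` with the column index `uD + d` among
the first `UD` columns (lexicographic ordering). -/
def emb (U D N : ℕ) (h : U * D ≤ N) (p : Fin U × Fin D) : Fin N :=
  ⟨p.1.1 * D + p.2.1, by
    refine lt_of_lt_of_le ?_ h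
    calc p.1.1 * D + p.2.1 < p.1.1 * D + D := by omega
      _ = (p.1.1 + 1) * D := by ring
      _ ≤ U * D := Nat.mul_le_mul (Nat.succ_le_of_lt p.1.isLt) le_rfl⟩

/-- `Ā_{τ,ext} = (1/√N_p) P_{𝒩_p} diag(c) F_{N,N}`, with rows indexed by the
pilot subcarriers `𝒩_p = S`. -/
def AtauExt (N : ℕ) (c : Fin N → ℂ) (S : Finset (Fin N)) :
    Matrix {i // i ∈ S} (Fin N) ℂ := fun r n =>
  ((Real.sqrt S.card : ℝ) : ℂ)⁻¹ * c r.1 * Fmat N N r.1 n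

/-- `Ā_τ`: the first `UD` columns of `Ā_{τ,ext}`, with columns indexed by
pairs `(u,d)`. -/
def Atau (N U D : ℕ) (hUD : U * D ≤ N) (c : Fin N → ℂ) (S : Finset (Fin N)) :
    Matrix {i // i ∈ S} (Fin U × Fin D) ℂ := fun r p =>
  AtauExt N c S r (emb U D N hUD p)

/-- `Ā_θ = (1/√M_p) P_{ℳ_p} F_{M,M}`, with rows indexed by the observed
antennas `ℳ_p = T`. -/
def Atheta (M : ℕ) (T : Finset (Fin M)) :
    Matrix {i // i ∈ T} (Fin M) ℂ := fun r m =>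
  ((Real.sqrt T.card : ℝ) : ℂ)⁻¹ * Fmat M M r.1 m

/-- `A = Ā_θ* ⊗ Ā_τ` (F-S option), acting on 3-level block vectors in
`ℂ^{M·U·D}`: the outer index ranges over the `M` columns of `Ā_θ*` and the
inner indices over the `UD` columns of `Ā_τ`. -/
def AmatFS (N M U D : ℕ) (hUD : U * D ≤ N) (c : Fin N → ℂ)
    (S : Finset (Fin N)) (T : Finset (Fin M)) :
    Matrix ({i // i ∈ T} × {i // i ∈ S}) (Fin M × Fin U × Fin D) ℂ := fun r j =>
  star (Atheta M T r.1 j.1) * Atau N U D hUD c S r.2 j.2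

/- ===== Auxiliary lemmas ===== -/

lemma sqNorm_nonneg' {ι : Type*} [Fintype ι] (x : ι → ℂ) : 0 ≤ sqNorm x :=
  Finset.sum_nonneg fun i _ => by positivity

lemma ripSet_nonempty {m n : Type*} [Fintype m] [Fintype n] (A : Matrix m n ℂ) (s : ℕ) :
    {δ : ℝ | 0 ≤ δ ∧ ∀ x : n → ℂ, Sparse s x →
      (1 - δ) * sqNorm x ≤ sqNorm (A.mulVec x) ∧
        sqNorm (A.mulVec x) ≤ (1 + δ) * sqNorm x}.Nonempty := by
  refine ⟨1 + ∑ r, ∑ j, ‖A r j‖ ^ 2, by positivity, fun x _ => ?_⟩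
  have hC : (0:ℝ) ≤ ∑ r, ∑ j, ‖A r j‖ ^ 2 :=
    Finset.sum_nonneg fun r _ => Finset.sum_nonneg fun j _ => by positivity
  constructor
  · have h1 : (1 - (1 + ∑ r, ∑ j, ‖A r j‖ ^ 2)) * sqNorm x ≤ 0 := by
      have := sqNorm_nonneg' x
      nlinarith
    exact h1.trans (sqNorm_nonneg' (A.mulVec x))
  · have key : ∀ r, ‖A.mulVec x r‖ ^ 2 ≤ (∑ j, ‖A r j‖ ^ 2) * sqNorm x := by
      intro r
      have h1 : ‖A.mulVec x r‖ ≤ ∑ j, ‖A r j‖ * ‖x j‖ := by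
        refine le_trans ?_ (le_of_eq (Finset.sum_congr rfl fun j _ => norm_mul _ _))
        exact norm_sum_le _ _
      calc ‖A.mulVec x r‖ ^ 2 ≤ (∑ j, ‖A r j‖ * ‖x j‖) ^ 2 := by
            apply pow_le_pow_left₀ (norm_nonneg _) h1
        _ ≤ (∑ j, ‖A r j‖ ^ 2) * ∑ j, ‖x j‖ ^ 2 :=
            Finset.sum_mul_sq_le_sq_mul_sq _ _ _
    calc sqNorm (A.mulVec x) = ∑ r, ‖A.mulVec x r‖ ^ 2 := rfl
      _ ≤ ∑ r, (∑ j, ‖A r j‖ ^ 2) * sqNorm x := Finset.sum_le_sum fun r _ => key r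
      _ = (∑ r, ∑ j, ‖A r j‖ ^ 2) * sqNorm x := by rw [Finset.sum_mul]
      _ ≤ (1 + (1 + ∑ r, ∑ j, ‖A r j‖ ^ 2)) * sqNorm x :=
          mul_le_mul_of_nonneg_right (by linarith) (sqNorm_nonneg' x)

lemma exists_rip_lt {m n : Type*} [Fintype m] [Fintype n] (A : Matrix m n ℂ) (s : ℕ) {δ : ℝ}
    (h : RIPconst A s < δ) :
    ∃ δ', (0 ≤ δ' ∧ ∀ x : n → ℂ, Sparse s x →
      (1 - δ') * sqNorm x ≤ sqNorm (A.mulVec x) ∧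
        sqNorm (A.mulVec x) ≤ (1 + δ') * sqNorm x) ∧ δ' < δ := by
  obtain ⟨δ', hmem, hlt⟩ := exists_lt_of_csInf_lt (ripSet_nonempty A s) h
  exact ⟨δ', hmem, hlt⟩

lemma emb_injective (U D N : ℕ) (h : U * D ≤ N) (hD : 0 < D) :
    Function.Injective (emb U D N h) := by
  intro p q hpq
  have hval : p.1.1 * D + p.2.1 = q.1.1 * D + q.2.1 := congrArg Fin.val hpq
  have e : ∀ r : Fin U × Fin D, (r.1.1 * D + r.2.1) / D = r.1.1 := by
    intro r
    rw [add_comm, mul_comm, Nat.add_mul_div_left _ _ hD, Nat.div_eq_of_lt r.2.isLt, zero_add]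
  have h1 : p.1.1 = q.1.1 := by rw [← e p, ← e q, hval]
  have h2 : p.2.1 = q.2.1 := by
    have := congrArg (· * D) h1
    omega
  exact Prod.ext (Fin.ext h1) (Fin.ext h2)

section Extend

variable {α β m' : Type*} [Fintype α] [Fintype β] [Fintype m']
  (e : α → β) (he : Function.Injective e) (w : α → ℂ)

include he

lemma sum_over_extend (f : β → ℂ → ℝ) (hf : ∀ b, f b 0 = 0) :
    ∑ b : β, f b (Function.extend e w 0 b) = ∑ a : α, f (e a) (w a) := by
  classical
  rw [← Finset.sum_subset (Finset.subset_univ (Finset.univ.image e))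
      (fun b _ hb => by
        rw [Function.extend_apply' _ _ _ (fun ⟨a, ha⟩ =>
          hb (Finset.mem_image.2 ⟨a, Finset.mem_univ a, ha⟩))]
        exact hf b),
    Finset.sum_image (fun a _ a' _ hh => he hh)]
  exact Finset.sum_congr rfl fun a _ => by rw [he.extend_apply]

lemma sqNorm_extend : sqNorm (Function.extend e w 0 : β → ℂ) = sqNorm w := by
  classical
  unfold sqNorm
  rw [← Finset.sum_subset (Finset.subset_univ (Finset.univ.image e))
      (fun b _ hb => by
        rw [Function.extend_apply' _ _ _ (fun ⟨a, ha⟩ =>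
          hb (Finset.mem_image.2 ⟨a, Finset.mem_univ a, ha⟩))]
        simp),
    Finset.sum_image (fun a _ a' _ hh => he hh)]
  exact Finset.sum_congr rfl fun a _ => by rw [he.extend_apply]

lemma mulVec_extend (B : Matrix m' β ℂ) :
    (Matrix.mulVec (fun r a => B r (e a)) w) = B.mulVec (Function.extend e w 0) := by
  classical
  funext r
  show ∑ a : α, B r (e a) * w a = ∑ b : β, B r b * Function.extend e w 0 b
  rw [← Finset.sum_subset (Finset.subset_univ (Finset.univ.image e))
      (fun b _ hb => by
        rw [Function.extend_apply' _ _ _ (fun ⟨a, ha⟩ =>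
          hb (Finset.mem_image.2 ⟨a, Finset.mem_univ a, ha⟩))]
        simp),
    Finset.sum_image (fun a _ a' _ hh => he hh)]
  exact (Finset.sum_congr rfl fun a _ => by rw [he.extend_apply]).symm

lemma sparse_extend (s : ℕ) (hw : Sparse s w) :
    Sparse s (Function.extend e w 0 : β → ℂ) := by
  classical
  unfold Sparse at hw ⊢
  have hsub : (Finset.univ.filter fun b : β => Function.extend e w 0 b ≠ 0)
      ⊆ (Finset.univ.filter fun a : α => w a ≠ 0).image e := by
    intro b hb
    simp only [Finset.mem_filter, Finset.mem_univ, true_and] at hb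
    by_cases hr : ∃ a, e a = b
    · obtain ⟨a, ha⟩ := hr
      subst ha
      rw [he.extend_apply] at hb
      exact Finset.mem_image.2 ⟨a, Finset.mem_filter.2 ⟨Finset.mem_univ a, hb⟩, rfl⟩
    · exact absurd (by rw [Function.extend_apply' _ _ _ hr]; rfl) hb
  calc (Finset.univ.filter fun b : β => Function.extend e w 0 b ≠ 0).card
      ≤ ((Finset.univ.filter fun a : α => w a ≠ 0).image e).card := Finset.card_le_card hsub
    _ ≤ (Finset.univ.filter fun a : α => w a ≠ 0).card := Finset.card_image_le
    _ ≤ s := hw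

end Extend

lemma sparse_of_block {N₂ N₃ s₂ s₃ : ℕ} (x : Fin N₂ × Fin N₃ → ℂ)
    (h₂ : (Finset.univ.filter fun i₂ : Fin N₂ => (fun i₃ => x (i₂, i₃)) ≠ 0).card ≤ s₂)
    (h₃ : ∀ i₂, Sparse s₃ (fun i₃ => x (i₂, i₃))) : Sparse (s₂ * s₃) x := by
  classical
  unfold Sparse
  set S₂ := Finset.univ.filter fun i₂ : Fin N₂ => (fun i₃ => x (i₂, i₃)) ≠ 0 with hS₂
  have hfib : ∀ p ∈ Finset.univ.filter (fun p : Fin N₂ × Fin N₃ => x p ≠ 0), p.1 ∈ S₂ := by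
    intro p hp
    simp only [Finset.mem_filter, Finset.mem_univ, true_and] at hp
    simp only [hS₂, Finset.mem_filter, Finset.mem_univ, true_and]
    intro h0
    apply hp
    have := congrFun h0 p.2
    simpa using this
  rw [Finset.card_eq_sum_card_fiberwise hfib]
  have hb : ∀ i₂ ∈ S₂,
      ((Finset.univ.filter (fun p : Fin N₂ × Fin N₃ => x p ≠ 0)).filter
        (fun p => p.1 = i₂)).card ≤ s₃ := by
    intro i₂ _
    refine le_trans (Finset.card_le_card_of_injOn Prod.snd ?_ ?_) (h₃ i₂)
    · intro p hp
      simp only [Finset.coe_filter, Finset.mem_filter, Finset.mem_univ, true_and, Set.mem_setOf_eq] at hp ⊢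
      obtain ⟨hne, hfst⟩ := hp
      intro h0
      apply hne
      rw [show p = (i₂, p.2) from by rw [← hfst]]
      exact h0
    · intro p hp q hq hh
      simp only [Finset.coe_filter, Set.mem_setOf_eq] at hp hq
      exact Prod.ext (hp.2.trans hq.2.symm) hh
  calc ∑ i₂ ∈ S₂, ((Finset.univ.filter (fun p : Fin N₂ × Fin N₃ => x p ≠ 0)).filter
        (fun p => p.1 = i₂)).card
      ≤ ∑ _i₂ ∈ S₂, s₃ := Finset.sum_le_sum hb
    _ = S₂.card * s₃ := by rw [Finset.sum_const, smul_eq_mul]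
    _ ≤ s₂ * s₃ := Nat.mul_le_mul_right _ h₂

/-- **deterministic core of the overhead theorem, F-S option.**
If `δ_{9K_VK_L}(Ā_{τ,ext}) < δ_τ` and `δ_{3VL}(Ā_θ*) < δ_θ` with
`δ_τ + δ_θ + δ_τδ_θ < 1/√3`, then `δ_{(3VL,3K_V,3K_L)}(Ā_θ* ⊗ Ā_τ) < 1/√3`. -/
theorem overhead_deterministic_FS (N M U D V L KV KL : ℕ)
    (hN : 0 < N) (hM : 0 < M) (hU : 0 < U) (hD : 0 < D)
    (hV : 0 < V) (hL : 0 < L) (hKV : 0 < KV) (hKL : 0 < KL)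
    (hUD : U * D ≤ N) (hVL : 3 * (V * L) ≤ M) (hKVU : 3 * KV ≤ U) (hKLD : 3 * KL ≤ D)
    (c : Fin N → ℂ) (hc : ∀ n, ‖c n‖ = 1)
    (S : Finset (Fin N)) (T : Finset (Fin M))
    (δτ δθ : ℝ) (hδτ : 0 < δτ) (hδθ : 0 < δθ)
    (hsum : δτ + δθ + δτ * δθ < 1 / Real.sqrt 3)
    (hRIPτ : RIPconst (AtauExt N c S) (9 * (KV * KL)) < δτ)
    (hRIPθ : RIPconst (fun (r : {i // i ∈ T}) (m : Fin M) => star (Atheta M T r m))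
      (3 * (V * L)) < δθ) :
    HiRIPconst3 (AmatFS N M U D hUD c S T) (3 * (V * L)) (3 * KV) (3 * KL) <
      1 / Real.sqrt 3 := by
  classical
  obtain ⟨δ₂, ⟨hδ₂0, hδ₂⟩, hδ₂lt⟩ := exists_rip_lt _ _ hRIPτ
  obtain ⟨δ₁, ⟨hδ₁0, hδ₁⟩, hδ₁lt⟩ := exists_rip_lt _ _ hRIPθ
  set δ' : ℝ := δ₂ + δ₁ + δ₂ * δ₁ with hδ'def
  have hδ'0 : 0 ≤ δ' := by positivity
  set A₁ : Matrix {i // i ∈ T} (Fin M) ℂ := fun r m => star (Atheta M T r m) with hA₁def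
  set A₂ : Matrix {i // i ∈ S} (Fin U × Fin D) ℂ := Atau N U D hUD c S with hA₂def
  -- RIP for A₂ on sparse vectors, transferred from AtauExt
  have hemb : Function.Injective (emb U D N hUD) := emb_injective U D N hUD hD
  have hA₂rip : ∀ w : Fin U × Fin D → ℂ, Sparse (9 * (KV * KL)) w →
      (1 - δ₂) * sqNorm w ≤ sqNorm (A₂.mulVec w) ∧
        sqNorm (A₂.mulVec w) ≤ (1 + δ₂) * sqNorm w := by
    intro w hw
    have hmv : A₂.mulVec w = (AtauExt N c S).mulVec (Function.extend (emb U D N hUD) w 0) :=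
      mulVec_extend _ hemb w (AtauExt N c S)
    have hsn : sqNorm (Function.extend (emb U D N hUD) w 0 : Fin N → ℂ) = sqNorm w :=
      sqNorm_extend _ hemb w
    have := hδ₂ _ (sparse_extend _ hemb w _ hw)
    rw [hsn] at this
    rw [hmv]
    exact this
  have key : ∀ x : Fin M × Fin U × Fin D → ℂ, HiSparse3 (3 * (V * L)) (3 * KV) (3 * KL) x →
      (1 - δ') * sqNorm x ≤ sqNorm ((AmatFS N M U D hUD c S T).mulVec x) ∧
        sqNorm ((AmatFS N M U D hUD c S T).mulVec x) ≤ (1 + δ') * sqNorm x := by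
    intro x hx
    set xm : Fin M → (Fin U × Fin D → ℂ) := fun m p => x (m, p) with hxm
    set y : Fin M → ({i // i ∈ S} → ℂ) := fun m => A₂.mulVec (xm m) with hy
    -- rewrite the Kronecker mulVec
    have hmv : ∀ r : {i // i ∈ T} × {i // i ∈ S},
        (AmatFS N M U D hUD c S T).mulVec x r = A₁.mulVec (fun m => y m r.2) r.1 := by
      intro r
      show ∑ j : Fin M × Fin U × Fin D, (star (Atheta M T r.1 j.1) * A₂ r.2 j.2) * x j
          = ∑ m : Fin M, A₁ r.1 m * y m r.2
      rw [Fintype.sum_prod_type]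
      refine Finset.sum_congr rfl fun m _ => ?_
      show (∑ p : Fin U × Fin D, (star (Atheta M T r.1 m) * A₂ r.2 p) * x (m, p))
          = A₁ r.1 m * ∑ p : Fin U × Fin D, A₂ r.2 p * xm m p
      rw [Finset.mul_sum]
      exact Finset.sum_congr rfl fun p _ => by show _ = star (Atheta M T r.1 m) * _; ring
    have hsq : sqNorm ((AmatFS N M U D hUD c S T).mulVec x)
        = ∑ r₂ : {i // i ∈ S}, sqNorm (A₁.mulVec (fun m => y m r₂)) := by
      show ∑ r : {i // i ∈ T} × {i // i ∈ S}, ‖(AmatFS N M U D hUD c S T).mulVec x r‖ ^ 2 = _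
      rw [Fintype.sum_prod_type, Finset.sum_comm]
      exact Finset.sum_congr rfl fun r₂ _ => Finset.sum_congr rfl fun r₁ _ => by
        rw [hmv (r₁, r₂)]
    -- sparsity of the slices
    have hslice : ∀ r₂ : {i // i ∈ S}, Sparse (3 * (V * L)) (fun m => y m r₂) := by
      intro r₂
      refine le_trans (Finset.card_le_card ?_) hx.1
      intro m hm
      simp only [Finset.mem_filter, Finset.mem_univ, true_and] at hm ⊢
      intro h0
      apply hm
      have hz : ∀ p, xm m p = 0 := fun p => congrFun h0 p
      show A₂.mulVec (xm m) r₂ = 0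
      show ∑ p : Fin U × Fin D, A₂ r₂ p * xm m p = 0
      exact Finset.sum_eq_zero fun p _ => by rw [hz p, mul_zero]
    -- sparsity of the blocks
    have hblock : ∀ m : Fin M, Sparse (9 * (KV * KL)) (xm m) := by
      intro m
      have h1 := (hx.2 m).1
      have h2 := (hx.2 m).2
      have := sparse_of_block (xm m) h1 h2
      have he : 3 * KV * (3 * KL) = 9 * (KV * KL) := by ring
      rwa [he] at this
    -- the two summed RIP estimates
    set a : ℝ := ∑ m : Fin M, sqNorm (y m) with ha
    have ha0 : 0 ≤ a := Finset.sum_nonneg fun m _ => sqNorm_nonneg' _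
    have hswap : ∑ r₂ : {i // i ∈ S}, sqNorm (fun m => y m r₂) = a := by
      show ∑ r₂ : {i // i ∈ S}, ∑ m : Fin M, ‖y m r₂‖ ^ 2 = ∑ m : Fin M, ∑ r₂, ‖y m r₂‖ ^ 2
      exact Finset.sum_comm
    have hx_dec : sqNorm x = ∑ m : Fin M, sqNorm (xm m) := by
      show ∑ j : Fin M × Fin U × Fin D, ‖x j‖ ^ 2 = _
      rw [Fintype.sum_prod_type]
      rfl
    have hs0 : 0 ≤ sqNorm x := sqNorm_nonneg' x
    have ht_lb : (1 - δ₁) * a ≤ sqNorm ((AmatFS N M U D hUD c S T).mulVec x) := by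
      rw [hsq, ← hswap, Finset.mul_sum]
      exact Finset.sum_le_sum fun r₂ _ => (hδ₁ _ (hslice r₂)).1
    have ht_ub : sqNorm ((AmatFS N M U D hUD c S T).mulVec x) ≤ (1 + δ₁) * a := by
      rw [hsq, ← hswap, Finset.mul_sum]
      exact Finset.sum_le_sum fun r₂ _ => (hδ₁ _ (hslice r₂)).2
    have ha_lb : (1 - δ₂) * sqNorm x ≤ a := by
      rw [hx_dec, Finset.mul_sum]
      exact Finset.sum_le_sum fun m _ => (hA₂rip _ (hblock m)).1
    have ha_ub : a ≤ (1 + δ₂) * sqNorm x := by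
      rw [hx_dec, Finset.mul_sum]
      exact Finset.sum_le_sum fun m _ => (hA₂rip _ (hblock m)).2
    have hprod : δ₁ * a ≤ δ₁ * ((1 + δ₂) * sqNorm x) := mul_le_mul_of_nonneg_left ha_ub hδ₁0
    constructor
    · rw [hδ'def]; nlinarith
    · rw [hδ'def]; nlinarith
  have hmem : δ' ∈ {δ : ℝ | 0 ≤ δ ∧ ∀ x : Fin M × Fin U × Fin D → ℂ,
      HiSparse3 (3 * (V * L)) (3 * KV) (3 * KL) x →
      (1 - δ) * sqNorm x ≤ sqNorm ((AmatFS N M U D hUD c S T).mulVec x) ∧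
        sqNorm ((AmatFS N M U D hUD c S T).mulVec x) ≤ (1 + δ) * sqNorm x} := ⟨hδ'0, key⟩
  have hle : HiRIPconst3 (AmatFS N M U D hUD c S T) (3 * (V * L)) (3 * KV) (3 * KL) ≤ δ' :=
    csInf_le ⟨0, fun y hy => hy.1⟩ hmem
  refine lt_of_le_of_lt hle (lt_of_lt_of_le ?_ hsum.le)
  have hmul : δ₂ * δ₁ ≤ δτ * δθ := mul_le_mul hδ₂lt.le hδ₁lt.le hδ₁0 hδτ.le
  rw [hδ'def]
  linarith
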